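/- Let 0 < 1/n ≪ ρ ≪ d, η, 1/r < 1. Let G be an n-vertex graph and U ⊆ V(G) of size n' ≥ ηn/2 such that G[U] is (ρ,d)-dense and every vertex x ∈ V(G) satisfies |N(x) ∩ U| ≥ (1/2+η)n'. Let X, Y, W be pairwise disjoint subsets of V(G) with |X| = |Y| = ⌈4r/η⌉ and |W| ≤ ηn'/2. Then there exists Z ⊆ U such that (i) G[Z] is a complete graph K_r, (ii) Z is disjoint from X ∪ Y ∪ W, and (iii) there exist X' ⊆ X and Y' ⊆ Y with |X'| = |Y'| = r such that every vertex of X' ∪ Y' is adjacent in G to every vertex of Z. -/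

import Mathlib

open Finset

/-- The number of edges of `G` with both endpoints in `X`, i.e. `e(G[X])`. -/
noncomputable def inducedEdgeCount {V : Type*} [Fintype V] (G : SimpleGraph V)
    (X : Finset V) : ℕ :=
  letI : DecidableEq V := Classical.decEq V
  letI : DecidableRel G.Adj := Classical.decRel _
  letI : DecidablePred (fun e : Sym2 V => ∀ v ∈ e, v ∈ X) := Classical.decPred _
  (G.edgeFinset.filter (fun e => ∀ v ∈ e, v ∈ X)).card

/-- A graph `G` on `n` vertices is `(ρ,d)`-dense if every vertex subset `X` satisfies
`e(G[X]) ≥ d·C(|X|,2) − ρn²`. -/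
def LocallyDense {V : Type*} [Fintype V] (G : SimpleGraph V) (ρ d : ℝ) : Prop :=
  ∀ X : Finset V,
    d * (X.card.choose 2 : ℝ) - ρ * (Fintype.card V : ℝ) ^ 2 ≤ (inducedEdgeCount G X : ℝ)


/-- The number of neighbours of `x` in `G` lying in `A`, i.e. `|N_G(x) ∩ A|`. -/
noncomputable def nbhdCardIn {V : Type*} (G : SimpleGraph V) (A : Finset V) (x : V) : ℕ :=
  letI : DecidableRel G.Adj := Classical.decRel _
  (A.filter (fun y => G.Adj x y)).card

open Classical in
lemma handshake_le {V : Type*} [Fintype V] (H : SimpleGraph V) (A : Finset V) :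
    inducedEdgeCount H A ≤ ∑ v ∈ A, (A.filter (fun w => H.Adj v w)).card := by
  classical
  have h1 : inducedEdgeCount H A
      = (H.edgeFinset.filter (fun e => ∀ v ∈ e, v ∈ A)).card := by
    simp only [inducedEdgeCount]
    exact congrArg Finset.card (Finset.filter_congr_decidable _ _ _)
  rw [h1]
  have h2 : (H.edgeFinset.filter (fun e => ∀ v ∈ e, v ∈ A))
      ⊆ ((A ×ˢ A).filter (fun p => H.Adj p.1 p.2)).image (fun p => Sym2.mk p.1 p.2) := by
    intro e he
    simp only [mem_filter, SimpleGraph.mem_edgeFinset] at he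
    obtain ⟨he1, he2⟩ := he
    induction e with
    | _ a b =>
      have hab : H.Adj a b := he1
      have ha : a ∈ A := he2 a (by simp)
      have hb : b ∈ A := he2 b (by simp)
      exact Finset.mem_image.2 ⟨(a, b), by simp [ha, hb, hab], rfl⟩
  calc (H.edgeFinset.filter (fun e => ∀ v ∈ e, v ∈ A)).card
      ≤ (((A ×ˢ A).filter (fun p => H.Adj p.1 p.2)).image (fun p => Sym2.mk p.1 p.2)).card :=
        Finset.card_le_card h2
    _ ≤ ((A ×ˢ A).filter (fun p => H.Adj p.1 p.2)).card := Finset.card_image_le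
    _ = ∑ v ∈ A, (A.filter (fun w => H.Adj v w)).card := by
        rw [Finset.card_eq_sum_card_fiberwise (f := Prod.fst) (t := A)
          (fun p hp => (Finset.mem_filter.1 hp).1 |> Finset.mem_product.1 |>.1)]
        refine Finset.sum_congr rfl fun v hv => ?_
        apply Finset.card_bij (fun p _ => p.2)
        · intro p hp
          simp only [mem_filter, mem_product] at hp
          simp [hp.1.1.2, hp.2 ▸ hp.1.2]
        · intro p hp q hq hpq
          simp only [mem_filter] at hp hq
          exact Prod.ext (hp.2.trans hq.2.symm) hpq
        · intro w hw
          simp only [mem_filter] at hw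
          exact ⟨(v, w), by simp [hv, hw.1, hw.2], rfl⟩

open Classical in
lemma clique_lemma {V : Type*} [Fintype V] (H : SimpleGraph V) (d ρ : ℝ)
    (hd : 0 < d) (hd8 : d ≤ 8) (hdense : LocallyDense H ρ d) (f : ℝ) (hf : 4 ≤ f)
    (hρ : ρ * (Fintype.card V : ℝ) ^ 2 ≤ d / 8 * f ^ 2) :
    ∀ k : ℕ, ∀ A : Finset V, (8 / d) ^ k * f ≤ (A.card : ℝ) →
    ∃ Z ⊆ A, Z.card = k ∧ H.IsClique (Z : Set V) := by
  classical
  intro k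
  induction k with
  | zero => exact fun A _ => ⟨∅, Finset.empty_subset _, rfl, by simp⟩
  | succ k ih =>
    intro A hA
    have h8d : (1 : ℝ) ≤ 8 / d := by
      rw [le_div_iff₀ hd]; linarith
    have hpow : ∀ j : ℕ, (1 : ℝ) ≤ (8 / d) ^ j := fun j => one_le_pow₀ h8d
    have hfA : f ≤ (A.card : ℝ) := by
      calc f = 1 * f := (one_mul f).symm
        _ ≤ (8 / d) ^ (k + 1) * f := by
            apply mul_le_mul_of_nonneg_right (hpow _) (by linarith)
        _ ≤ (A.card : ℝ) := hA
    have hA4 : (4 : ℝ) ≤ (A.card : ℝ) := le_trans hf hfA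
    have hApos : (0 : ℝ) < (A.card : ℝ) := by linarith
    have hne : A.Nonempty := by
      rw [← Finset.card_pos]; exact_mod_cast hApos
    obtain ⟨z, hzA, hzmax⟩ := Finset.exists_max_image A
      (fun v => ((A.filter (fun w => H.Adj v w)).card : ℝ)) hne
    set a : ℝ := (A.card : ℝ) with ha
    set degz : ℝ := ((A.filter (fun w => H.Adj z w)).card : ℝ) with hdegz
    have hsum : (inducedEdgeCount H A : ℝ) ≤ a * degz := by
      calc (inducedEdgeCount H A : ℝ)
          ≤ ((∑ v ∈ A, (A.filter (fun w => H.Adj v w)).card : ℕ) : ℝ) := by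
            exact_mod_cast handshake_le H A
        _ = ∑ v ∈ A, ((A.filter (fun w => H.Adj v w)).card : ℝ) := by push_cast; ring
        _ ≤ ∑ _v ∈ A, degz := Finset.sum_le_sum (fun v hv => hzmax v hv)
        _ = a * degz := by rw [Finset.sum_const, nsmul_eq_mul]
    have hchoose : ((A.card.choose 2 : ℕ) : ℝ) = a * (a - 1) / 2 := by
      rw [Nat.cast_choose_two]
    have hdens := hdense A
    rw [hchoose] at hdens
    have hkey : d / 8 * a ≤ degz := by
      have h1 : d * (a * (a - 1) / 2) - ρ * (Fintype.card V : ℝ) ^ 2 ≤ a * degz :=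
        le_trans hdens hsum
      have hfa2 : d / 8 * f ^ 2 ≤ d / 8 * a ^ 2 := by
        nlinarith [mul_nonneg (mul_nonneg (by linarith : (0:ℝ) ≤ d / 8)
          (by linarith : (0:ℝ) ≤ a - f)) (by linarith : (0:ℝ) ≤ a + f)]
      have hq : (0:ℝ) ≤ d / 4 * a * a - d / 2 * a := by
        nlinarith [mul_nonneg (mul_nonneg (by linarith : (0:ℝ) ≤ d / 4) hApos.le)
          (by linarith : (0:ℝ) ≤ a - 2)]
      have h2 : d / 8 * a * a ≤ a * degz := by nlinarith
      have h3 : a * (d / 8 * a) ≤ a * degz := by nlinarith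
      exact (mul_le_mul_iff_right₀ hApos).1 h3
    have hstep : (8 / d) ^ k * f ≤ degz := by
      calc (8 / d) ^ k * f = d / 8 * ((8 / d) ^ (k+1) * f) := by
            rw [pow_succ]; field_simp
        _ ≤ d / 8 * a := by
            apply mul_le_mul_of_nonneg_left hA (by positivity)
        _ ≤ degz := hkey
    obtain ⟨Z, hZsub, hZcard, hZclique⟩ := ih (A.filter (fun w => H.Adj z w)) hstep
    have hzZ : z ∉ Z := fun hz => H.irrefl (Finset.mem_filter.1 (hZsub hz)).2
    refine ⟨insert z Z, ?_, ?_, ?_⟩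
    · exact Finset.insert_subset hzA (hZsub.trans (Finset.filter_subset _ _))
    · rw [Finset.card_insert_of_notMem hzZ, hZcard]
    · rw [Finset.coe_insert]
      exact hZclique.insert (fun b hb _ => (Finset.mem_filter.1 (hZsub hb)).2)

open Classical in
lemma sum_adj_comm {V : Type*} (G : SimpleGraph V) (S T : Finset V) :
    ∑ u ∈ S, (T.filter (fun x => G.Adj u x)).card
      = ∑ x ∈ T, (S.filter (fun u => G.Adj x u)).card := by
  classical
  simp only [Finset.card_filter]
  rw [Finset.sum_comm]
  refine Finset.sum_congr rfl fun x _ => Finset.sum_congr rfl fun u _ => ?_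
  simp [SimpleGraph.adj_comm]


set_option maxHeartbeats 2000000 in
/-- the key connecting ingredient lemma for locally dense graphs. -/
theorem stmt_4 :
    ∀ r : ℕ, 1 ≤ r → ∀ d η : ℝ, 0 < d → d < 1 → 0 < η → η < 1 →
    ∃ ρ₀ : ℝ, 0 < ρ₀ ∧ ∀ ρ : ℝ, 0 < ρ → ρ ≤ ρ₀ →
    ∃ n₀ : ℕ, ∀ n : ℕ, n₀ ≤ n → ∀ G : SimpleGraph (Fin n),
    ∀ U : Finset (Fin n),
      η * (n : ℝ) / 2 ≤ (U.card : ℝ) →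
      LocallyDense (G.induce (U : Set (Fin n))) ρ d →
      (∀ x : Fin n, (1 / 2 + η) * (U.card : ℝ) ≤ (nbhdCardIn G U x : ℝ)) →
    ∀ X Y W : Finset (Fin n),
      Disjoint X Y → Disjoint X W → Disjoint Y W →
      X.card = ⌈(4 * r : ℝ) / η⌉₊ → Y.card = ⌈(4 * r : ℝ) / η⌉₊ →
      (W.card : ℝ) ≤ η * (U.card : ℝ) / 2 →
    ∃ Z ⊆ U, Z.card = r ∧ G.IsClique (Z : Set (Fin n)) ∧
      Disjoint Z (X ∪ Y ∪ W) ∧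
      ∃ X' ⊆ X, ∃ Y' ⊆ Y, X'.card = r ∧ Y'.card = r ∧
        ∀ a ∈ X' ∪ Y', ∀ z ∈ Z, G.Adj a z := by
  intro r hr d η hd hd1 hη hη1
  classical
  set m : ℕ := ⌈(4 * r : ℝ) / η⌉₊ with hm_def
  have hmR : (4 * r : ℝ) / η ≤ (m : ℝ) := Nat.le_ceil _
  have hrR : (1 : ℝ) ≤ (r : ℝ) := by exact_mod_cast hr
  have h4r : (4 : ℝ) ≤ 4 * r / η := by
    rw [le_div_iff₀ hη]; nlinarith
  have hm4 : (4 : ℝ) ≤ (m : ℝ) := le_trans h4r hmR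
  have hrm : (r : ℝ) ≤ (m : ℝ) := by
    refine le_trans ?_ hmR
    rw [le_div_iff₀ hη]; nlinarith
  have hrmN : r ≤ m := by exact_mod_cast hrm
  set C : ℕ := (m.choose r) ^ 2 with hC_def
  have hCpos : (0 : ℝ) < (C : ℝ) := by
    have : 0 < C := pow_pos (Nat.choose_pos hrmN) 2
    exact_mod_cast this
  set c₀ : ℝ := η ^ 2 / (16 * C) with hc0_def
  have hc0 : 0 < c₀ := by positivity
  set μ : ℝ := c₀ * (d / 8) ^ r with hμ_def
  have hμpos : 0 < μ := by positivity
  refine ⟨d * μ ^ 2 / 8, by positivity, ?_⟩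
  intro ρ hρ0 hρle
  refine ⟨⌈16 * (m : ℝ) / η ^ 2⌉₊ + ⌈4 / μ⌉₊ + 1, ?_⟩
  intro n hn G U hUcard hdense hdeg X Y W hXY hXW hYW hX hY hW
  have hnm : 16 * (m : ℝ) / η ^ 2 ≤ (n : ℝ) := by
    refine le_trans (Nat.le_ceil _) ?_
    exact Nat.cast_le.2 (le_trans (by omega) hn)
  have hnμ : 4 / μ ≤ (n : ℝ) := by
    refine le_trans (Nat.le_ceil _) ?_
    exact Nat.cast_le.2 (le_trans (by omega) hn)
  have hn1 : (1 : ℝ) ≤ (n : ℝ) := by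
    exact Nat.one_le_cast.2 (le_trans (by omega) hn)
  have hnU : (0 : ℝ) < (U.card : ℝ) := lt_of_lt_of_le (by nlinarith) hUcard
  have hnUn : (U.card : ℝ) ≤ (n : ℝ) := by
    have : U.card ≤ n := le_trans (Finset.card_le_univ U) (le_of_eq (by simp))
    exact_mod_cast this
  -- U₁
  set U₁ : Finset (Fin n) := U \ (X ∪ Y ∪ W) with hU1_def
  have hXYWcard : (((X ∪ Y ∪ W).card : ℕ) : ℝ) ≤ 2 * m + η * (U.card : ℝ) / 2 := by
    have h1 : (X ∪ Y ∪ W).card ≤ X.card + Y.card + W.card :=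
      le_trans (Finset.card_union_le _ _) (by have := Finset.card_union_le X Y; omega)
    have h2 : ((X ∪ Y ∪ W).card : ℝ) ≤ (X.card : ℝ) + Y.card + W.card := by exact_mod_cast h1
    rw [hX, hY] at h2
    push_cast at h2 ⊢
    linarith [hW]
  have h2m : 2 * (m : ℝ) ≤ η / 4 * (U.card : ℝ) := by
    have h1 : (m : ℝ) ≤ η ^ 2 * n / 16 := by
      rw [div_le_iff₀ (by positivity)] at hnm; nlinarith
    nlinarith [hUcard]
  have hbridge : ∀ x : Fin n, (nbhdCardIn G U x : ℕ)
      = (U.filter (fun y => G.Adj x y)).card := by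
    intro x
    simp only [nbhdCardIn]
  have hU1deg : ∀ x : Fin n,
      (1 / 2 + η / 4) * (U.card : ℝ) ≤ ((U₁.filter (fun u => G.Adj x u)).card : ℝ) := by
    intro x
    have hsub : U.filter (fun y => G.Adj x y)
        ⊆ (U₁.filter (fun y => G.Adj x y)) ∪ (X ∪ Y ∪ W) := by
      intro y hy
      rw [Finset.mem_filter] at hy
      by_cases hy2 : y ∈ X ∪ Y ∪ W
      · exact Finset.mem_union_right _ hy2
      · exact Finset.mem_union_left _
          (Finset.mem_filter.2 ⟨Finset.mem_sdiff.2 ⟨hy.1, hy2⟩, hy.2⟩)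
    have hcard : ((U.filter (fun y => G.Adj x y)).card : ℝ)
        ≤ ((U₁.filter (fun y => G.Adj x y)).card : ℝ) + ((X ∪ Y ∪ W).card : ℝ) := by
      have := le_trans (Finset.card_le_card hsub) (Finset.card_union_le _ _)
      exact_mod_cast this
    have hdx := hdeg x
    rw [hbridge x] at hdx
    have hadjcomm : (U₁.filter (fun y => G.Adj x y)) = (U₁.filter (fun u => G.Adj x u)) := rfl
    linarith
  -- degree sums into U₁
  have hsum1 : (1 + η / 2) * (m : ℝ) * (U.card : ℝ)
      ≤ ∑ u ∈ U₁, (((X.filter (fun x => G.Adj u x)).card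
          + (Y.filter (fun x => G.Adj u x)).card : ℕ) : ℝ) := by
    have hXpart : (m : ℝ) * ((1 / 2 + η / 4) * (U.card : ℝ))
        ≤ ∑ u ∈ U₁, ((X.filter (fun x => G.Adj u x)).card : ℝ) := by
      have hswap := sum_adj_comm G U₁ X
      have : ∑ u ∈ U₁, ((X.filter (fun x => G.Adj u x)).card : ℝ)
          = ∑ x ∈ X, ((U₁.filter (fun u => G.Adj x u)).card : ℝ) := by
        exact_mod_cast congrArg (Nat.cast : ℕ → ℝ) hswap
      rw [this]
      calc (m : ℝ) * ((1 / 2 + η / 4) * (U.card : ℝ))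
          = X.card • ((1 / 2 + η / 4) * (U.card : ℝ)) := by
            rw [hX, nsmul_eq_mul]
        _ ≤ ∑ x ∈ X, ((U₁.filter (fun u => G.Adj x u)).card : ℝ) :=
            Finset.card_nsmul_le_sum _ _ _ (fun x _ => hU1deg x)
    have hYpart : (m : ℝ) * ((1 / 2 + η / 4) * (U.card : ℝ))
        ≤ ∑ u ∈ U₁, ((Y.filter (fun x => G.Adj u x)).card : ℝ) := by
      have hswap := sum_adj_comm G U₁ Y
      have : ∑ u ∈ U₁, ((Y.filter (fun x => G.Adj u x)).card : ℝ)
          = ∑ y ∈ Y, ((U₁.filter (fun u => G.Adj y u)).card : ℝ) := by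
        exact_mod_cast congrArg (Nat.cast : ℕ → ℝ) hswap
      rw [this]
      calc (m : ℝ) * ((1 / 2 + η / 4) * (U.card : ℝ))
          = Y.card • ((1 / 2 + η / 4) * (U.card : ℝ)) := by
            rw [hY, nsmul_eq_mul]
        _ ≤ ∑ y ∈ Y, ((U₁.filter (fun u => G.Adj y u)).card : ℝ) :=
            Finset.card_nsmul_le_sum _ _ _ (fun y _ => hU1deg y)
    have hsplit : ∑ u ∈ U₁, (((X.filter (fun x => G.Adj u x)).card
          + (Y.filter (fun x => G.Adj u x)).card : ℕ) : ℝ)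
        = (∑ u ∈ U₁, ((X.filter (fun x => G.Adj u x)).card : ℝ))
          + ∑ u ∈ U₁, ((Y.filter (fun x => G.Adj u x)).card : ℝ) := by
      rw [← Finset.sum_add_distrib]
      push_cast
      rfl
    rw [hsplit]
    nlinarith
  -- the set S of vertices with many neighbours in both X and Y
  set S : Finset (Fin n) := U₁.filter (fun u => (1 + η / 4) * (m : ℝ)
      ≤ (((X.filter (fun x => G.Adj u x)).card
          + (Y.filter (fun x => G.Adj u x)).card : ℕ) : ℝ)) with hS_def
  have hupper : ∑ u ∈ U₁, (((X.filter (fun x => G.Adj u x)).card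
          + (Y.filter (fun x => G.Adj u x)).card : ℕ) : ℝ)
      ≤ (S.card : ℝ) * (2 * m) + (1 + η / 4) * (m : ℝ) * (U.card : ℝ) := by
    rw [← Finset.sum_filter_add_sum_filter_not U₁ (fun u => (1 + η / 4) * (m : ℝ)
      ≤ (((X.filter (fun x => G.Adj u x)).card
          + (Y.filter (fun x => G.Adj u x)).card : ℕ) : ℝ))]
    have hb1 : ∑ u ∈ S, (((X.filter (fun x => G.Adj u x)).card
          + (Y.filter (fun x => G.Adj u x)).card : ℕ) : ℝ) ≤ (S.card : ℝ) * (2 * m) := by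
      have := Finset.sum_le_card_nsmul S (fun u => (((X.filter (fun x => G.Adj u x)).card
          + (Y.filter (fun x => G.Adj u x)).card : ℕ) : ℝ)) (2 * m) ?_
      · rw [nsmul_eq_mul] at this; exact this
      · intro u _
        have h1 : (X.filter (fun x => G.Adj u x)).card ≤ X.card :=
          Finset.card_filter_le _ _
        have h2 : (Y.filter (fun x => G.Adj u x)).card ≤ Y.card :=
          Finset.card_filter_le _ _
        rw [hX] at h1; rw [hY] at h2
        push_cast
        have h1' : ((X.filter (fun x => G.Adj u x)).card : ℝ) ≤ m := by exact_mod_cast h1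
        have h2' : ((Y.filter (fun x => G.Adj u x)).card : ℝ) ≤ m := by exact_mod_cast h2
        linarith
    have hb2 : ∑ u ∈ U₁.filter (fun u => ¬ ((1 + η / 4) * (m : ℝ)
          ≤ (((X.filter (fun x => G.Adj u x)).card
          + (Y.filter (fun x => G.Adj u x)).card : ℕ) : ℝ))),
          (((X.filter (fun x => G.Adj u x)).card
          + (Y.filter (fun x => G.Adj u x)).card : ℕ) : ℝ)
        ≤ (1 + η / 4) * (m : ℝ) * (U.card : ℝ) := by
      set T := U₁.filter (fun u => ¬ ((1 + η / 4) * (m : ℝ)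
          ≤ (((X.filter (fun x => G.Adj u x)).card
          + (Y.filter (fun x => G.Adj u x)).card : ℕ) : ℝ))) with hT_def
      have hTb : ∀ u ∈ T, (((X.filter (fun x => G.Adj u x)).card
          + (Y.filter (fun x => G.Adj u x)).card : ℕ) : ℝ) ≤ (1 + η / 4) * (m : ℝ) := by
        intro u hu
        have := (Finset.mem_filter.1 hu).2
        linarith [not_le.1 this]
      have h1 := Finset.sum_le_card_nsmul T _ _ hTb
      rw [nsmul_eq_mul] at h1
      have hTcard : (T.card : ℝ) ≤ (U.card : ℝ) := by
        have : T.card ≤ U.card :=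
          le_trans (Finset.card_le_card (Finset.filter_subset _ _))
            (Finset.card_le_card (Finset.sdiff_subset))
        exact_mod_cast this
      have hnn : (0:ℝ) ≤ (1 + η / 4) * (m : ℝ) := by positivity
      nlinarith
    exact add_le_add hb1 hb2
  have hScard : η / 8 * (U.card : ℝ) ≤ (S.card : ℝ) := by
    have hm0 : (0 : ℝ) < (m : ℝ) := by linarith
    have h1 : (m : ℝ) * (η / 4 * (U.card : ℝ)) ≤ (m : ℝ) * (2 * S.card) := by
      nlinarith [le_trans hsum1 hupper]
    have h2 : η / 4 * (U.card : ℝ) ≤ 2 * S.card := (mul_le_mul_iff_right₀ hm0).1 h1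
    linarith
  have hfXY : ∀ u ∈ S, r ≤ (X.filter (fun x => G.Adj u x)).card
      ∧ r ≤ (Y.filter (fun x => G.Adj u x)).card := by
    intro u hu
    have hmem := (Finset.mem_filter.1 hu).2
    have h1 : ((X.filter (fun x => G.Adj u x)).card : ℝ) ≤ m := by
      have := Finset.card_filter_le X (fun x => G.Adj u x)
      rw [hX] at this; exact_mod_cast this
    have h2 : ((Y.filter (fun x => G.Adj u x)).card : ℝ) ≤ m := by
      have := Finset.card_filter_le Y (fun x => G.Adj u x)
      rw [hY] at this; exact_mod_cast this
    have hrη : (r : ℝ) ≤ η / 4 * (m : ℝ) := by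
      rw [div_le_iff₀ hη] at hmR
      nlinarith
    push_cast at hmem
    constructor
    · exact_mod_cast (by linarith :
        (r : ℝ) ≤ ((X.filter (fun x => G.Adj u x)).card : ℝ))
    · exact_mod_cast (by linarith :
        (r : ℝ) ≤ ((Y.filter (fun x => G.Adj u x)).card : ℝ))
  -- pair counting
  set P : Finset (Finset (Fin n) × Finset (Fin n)) :=
    (X.powersetCard r) ×ˢ (Y.powersetCard r) with hP_def
  have hSP : (S.card : ℕ) ≤ ∑ p ∈ P,
      (S.filter (fun u => ∀ a ∈ p.1 ∪ p.2, G.Adj u a)).card := by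
    have hswap : ∑ p ∈ P, (S.filter (fun u => ∀ a ∈ p.1 ∪ p.2, G.Adj u a)).card
        = ∑ u ∈ S, (P.filter (fun p => ∀ a ∈ p.1 ∪ p.2, G.Adj u a)).card := by
      simp only [Finset.card_filter]
      rw [Finset.sum_comm]
    rw [hswap]
    have h1 : ∀ u ∈ S, 1 ≤ (P.filter (fun p => ∀ a ∈ p.1 ∪ p.2, G.Adj u a)).card := by
      intro u hu
      obtain ⟨hX1, hY1⟩ := hfXY u hu
      obtain ⟨X'', hX''sub, hX''card⟩ := Finset.exists_subset_card_eq hX1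
      obtain ⟨Y'', hY''sub, hY''card⟩ := Finset.exists_subset_card_eq hY1
      refine Finset.card_pos.2 ⟨(X'', Y''), Finset.mem_filter.2 ⟨?_, ?_⟩⟩
      · rw [hP_def, Finset.mem_product]
        constructor
        · exact Finset.mem_powersetCard.2
            ⟨hX''sub.trans (Finset.filter_subset _ _), hX''card⟩
        · exact Finset.mem_powersetCard.2
            ⟨hY''sub.trans (Finset.filter_subset _ _), hY''card⟩
      · intro a ha
        rcases Finset.mem_union.1 ha with h | h
        · exact (Finset.mem_filter.1 (hX''sub h)).2
        · exact (Finset.mem_filter.1 (hY''sub h)).2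
    calc S.card = ∑ _u ∈ S, 1 := by simp
      _ ≤ _ := Finset.sum_le_sum h1
  have hPcard : P.card = C := by
    rw [hP_def, Finset.card_product, Finset.card_powersetCard, Finset.card_powersetCard,
      hX, hY, hC_def, sq]
  have hSpos : (0 : ℝ) < (S.card : ℝ) := by nlinarith
  obtain ⟨p, hpP, hpge⟩ : ∃ p ∈ P, (S.card : ℝ) / C
      ≤ ((S.filter (fun u => ∀ a ∈ p.1 ∪ p.2, G.Adj u a)).card : ℝ) := by
    by_contra hcon
    push_neg at hcon
    have hPne : P.Nonempty := by
      rcases Finset.eq_empty_or_nonempty P with h | h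
      · exfalso
        rw [h, Finset.sum_empty] at hSP
        have : S.card = 0 := Nat.le_zero.1 hSP
        rw [this] at hSpos
        simp at hSpos
      · exact h
    have hlt : ∑ p ∈ P, ((S.filter (fun u => ∀ a ∈ p.1 ∪ p.2, G.Adj u a)).card : ℝ)
        < ∑ _p ∈ P, (S.card : ℝ) / C :=
      Finset.sum_lt_sum_of_nonempty hPne hcon
    rw [Finset.sum_const, nsmul_eq_mul, hPcard] at hlt
    have hcast : (S.card : ℝ) ≤ ∑ p ∈ P,
        ((S.filter (fun u => ∀ a ∈ p.1 ∪ p.2, G.Adj u a)).card : ℝ) := by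
      exact_mod_cast hSP
    rw [mul_div_cancel₀ _ (ne_of_gt hCpos)] at hlt
    linarith
  obtain ⟨hpX, hpY⟩ := Finset.mem_product.1 hpP
  obtain ⟨hX'X, hX'card⟩ := Finset.mem_powersetCard.1 hpX
  obtain ⟨hY'Y, hY'card⟩ := Finset.mem_powersetCard.1 hpY
  set Nstar : Finset (Fin n) := S.filter (fun u => ∀ a ∈ p.1 ∪ p.2, G.Adj u a)
    with hNstar_def
  have hNstarcard : c₀ * (n : ℝ) ≤ (Nstar.card : ℝ) := by
    refine le_trans ?_ hpge
    rw [le_div_iff₀ hCpos, hc0_def]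
    have : η ^ 2 / (16 * C) * n * C = η ^ 2 * n / 16 := by
      field_simp
    rw [this]
    nlinarith
  -- move to the subtype ↥U and find the clique
  have hNstarU : Nstar ⊆ U := by
    intro z hz
    have := (Finset.mem_filter.1 hz).1
    have := (Finset.mem_filter.1 this).1
    exact (Finset.mem_sdiff.1 this).1
  have hcardV' : (Fintype.card ↥(U : Set (Fin n)) : ℕ) = U.card := by
    rw [← Set.toFinset_card, Finset.toFinset_coe]
  set Ahat : Finset ↥(U : Set (Fin n)) :=
    Finset.univ.filter (fun v => (v : Fin n) ∈ Nstar) with hAhat_def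
  have hAhatcard : Ahat.card = Nstar.card := by
    refine Finset.card_bij (fun v _ => (v : Fin n)) ?_ ?_ ?_
    · intro v hv
      exact (Finset.mem_filter.1 hv).2
    · intro v _ w _ hvw
      exact Subtype.ext hvw
    · intro z hz
      exact ⟨⟨z, Finset.mem_coe.2 (hNstarU hz)⟩, Finset.mem_filter.2 ⟨Finset.mem_univ _, hz⟩, rfl⟩
  have hf4 : (4 : ℝ) ≤ μ * n := by
    rw [div_le_iff₀ hμpos] at hnμ
    linarith [hnμ]
  have hρbound : ρ * ((Fintype.card ↥(U : Set (Fin n)) : ℕ) : ℝ) ^ 2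
      ≤ d / 8 * (μ * n) ^ 2 := by
    rw [hcardV']
    have h1 : ρ * ((U.card : ℝ)) ^ 2 ≤ ρ * (n : ℝ) ^ 2 := by
      apply mul_le_mul_of_nonneg_left _ (le_of_lt hρ0)
      nlinarith
    have h2 : ρ * (n : ℝ) ^ 2 ≤ d * μ ^ 2 / 8 * (n : ℝ) ^ 2 := by
      apply mul_le_mul_of_nonneg_right hρle (by positivity)
    calc ρ * ((U.card : ℝ)) ^ 2 ≤ d * μ ^ 2 / 8 * (n : ℝ) ^ 2 := le_trans h1 h2
      _ = d / 8 * (μ * n) ^ 2 := by ring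
  have hAhatge : (8 / d) ^ r * (μ * n) ≤ (Ahat.card : ℝ) := by
    rw [hAhatcard]
    have hpow1 : (8 / d) ^ r * (d / 8) ^ r = 1 := by
      rw [← mul_pow]
      rw [div_mul_div_comm]
      rw [show (8 : ℝ) * d / (d * 8) = 1 by field_simp]
      exact one_pow r
    have : (8 / d) ^ r * (μ * n) = c₀ * n := by
      rw [hμ_def]
      calc (8 / d) ^ r * (c₀ * (d / 8) ^ r * n)
          = ((8 / d) ^ r * (d / 8) ^ r) * (c₀ * n) := by ring
        _ = c₀ * n := by rw [hpow1, one_mul]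
    rw [this]
    exact hNstarcard
  obtain ⟨Zs, hZsub, hZscard, hZclique⟩ :=
    clique_lemma (G.induce (U : Set (Fin n))) d ρ hd (by linarith) hdense
      (μ * n) hf4 hρbound r Ahat hAhatge
  set Z : Finset (Fin n) := Zs.image Subtype.val with hZ_def
  have hZNstar : Z ⊆ Nstar := by
    intro z hz
    rw [hZ_def, Finset.mem_image] at hz
    obtain ⟨v, hv, rfl⟩ := hz
    exact (Finset.mem_filter.1 (hZsub hv)).2
  have hZU : Z ⊆ U := hZNstar.trans hNstarU
  have hZcard : Z.card = r := by
    rw [hZ_def, Finset.card_image_of_injective _ Subtype.val_injective, hZscard]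
  refine ⟨Z, hZU, hZcard, ?_, ?_, p.1, hX'X, p.2, hY'Y, hX'card, hY'card, ?_⟩
  · -- clique in G
    intro a ha b hb hab
    rw [hZ_def, Finset.coe_image] at ha hb
    obtain ⟨va, hva, rfl⟩ := ha
    obtain ⟨vb, hvb, rfl⟩ := hb
    have hne : va ≠ vb := fun h => hab (congrArg _ h)
    have := hZclique hva hvb hne
    simpa using this
  · -- disjointness
    refine Finset.disjoint_left.2 fun z hz hz' => ?_
    have h1 := (Finset.mem_filter.1 (hZNstar hz)).1
    have h2 := (Finset.mem_filter.1 h1).1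
    exact (Finset.mem_sdiff.1 h2).2 hz'
  · -- adjacency to X' ∪ Y'
    intro a ha z hz
    have := (Finset.mem_filter.1 (hZNstar hz)).2 a ha
    exact this.symm
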